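/- Let μ = μ₀ ∗ μ₁ be the convolution of two compactly supported probability measures on ℝ, neither of which is a Dirac measure. If Λ is a bi-zero set of μ₀ (i.e., 0 ∈ Λ and μ̂₀(λ−λ') = 0 for all distinct λ, λ' ∈ Λ), then Λ is a bi-zero set of μ but Λ is not a spectrum of μ. -/

import Mathlib

open MeasureTheory Complex Real
open scoped ENNReal

/-- The Fourier transform `μ̂(ξ) = ∫ e^{-2πiξx} dμ(x)`. -/
noncomputable def FT (μ : Measure ℝ) (ξ : ℝ) : ℂ :=
  ∫ x, Complex.exp (-2 * Real.pi * Complex.I * ξ * x) ∂μ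

/-- `Λ` is a bi-zero set of `ν`: `0 ∈ Λ` and `ν̂` vanishes on `(Λ - Λ) \ {0}`. -/
def IsBiZeroSet (ν : Measure ℝ) (Λ : Set ℝ) : Prop :=
  0 ∈ Λ ∧ ∀ l ∈ Λ, ∀ l' ∈ Λ, l ≠ l' → FT ν (l - l') = 0

/-- Orthonormality of the exponentials `e_λ, λ ∈ Λ`, in `L²(μ)`. -/
def ExpOrthonormal (μ : Measure ℝ) (Λ : Set ℝ) : Prop :=
  ∀ l ∈ Λ, ∀ l' ∈ Λ, FT μ (l - l') = if l = l' then 1 else 0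

/-- Totality of the exponentials `e_λ, λ ∈ Λ`, in `L²(μ)`. -/
def ExpTotal (μ : Measure ℝ) (Λ : Set ℝ) : Prop :=
  ∀ f : Lp ℂ 2 μ,
    (∀ l ∈ Λ, ∫ x, f x *
      (starRingEnd ℂ) (Complex.exp (-2 * Real.pi * Complex.I * l * x)) ∂μ = 0) → f = 0

/-- `Λ` is a spectrum of `μ`: the exponentials `e_λ, λ ∈ Λ`, form an
orthonormal basis (a maximal orthonormal family) of `L²(μ)`. -/
def IsSpectrumOf (μ : Measure ℝ) (Λ : Set ℝ) : Prop :=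
  ExpOrthonormal μ Λ ∧ ExpTotal μ Λ


open scoped InnerProductSpace

noncomputable def eexp (ξ : ℝ) : ℝ → ℂ := fun x => Complex.exp (-2 * Real.pi * Complex.I * ξ * x)

lemma continuous_eexp (ξ : ℝ) : Continuous (eexp ξ) := by
  unfold eexp; fun_prop

lemma norm_eexp (ξ x : ℝ) : ‖eexp ξ x‖ = 1 := by
  rw [eexp, show (-2 * Real.pi * Complex.I * ξ * x : ℂ)
    = ((-2 * Real.pi * ξ * x : ℝ) : ℂ) * Complex.I by push_cast; ring,
    Complex.norm_exp_ofReal_mul_I]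

lemma integrable_eexp (ν : Measure ℝ) [IsProbabilityMeasure ν] (ξ : ℝ) :
    Integrable (eexp ξ) ν :=
  (integrable_const (1:ℝ)).mono' (continuous_eexp ξ).aestronglyMeasurable
    (Filter.Eventually.of_forall fun x => by rw [norm_eexp])

lemma memL2_eexp (ν : Measure ℝ) [IsProbabilityMeasure ν] (ξ : ℝ) :
    MemLp (eexp ξ) 2 ν :=
  MemLp.of_bound (continuous_eexp ξ).aestronglyMeasurable 1
    (Filter.Eventually.of_forall fun x => by rw [norm_eexp])

lemma FT_eq (ν : Measure ℝ) (ξ : ℝ) : FT ν ξ = ∫ x, eexp ξ x ∂ν := rfl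

lemma FT_zero (ν : Measure ℝ) [IsProbabilityMeasure ν] : FT ν 0 = 1 := by simp [FT]

lemma norm_FT_le (ν : Measure ℝ) [IsProbabilityMeasure ν] (ξ : ℝ) : ‖FT ν ξ‖ ≤ 1 := by
  have := norm_integral_le_of_norm_le_const (μ := ν) (f := eexp ξ) (C := 1)
    (Filter.Eventually.of_forall fun x => by rw [norm_eexp])
  simpa [FT_eq] using this

lemma FT_conv (μ₀ μ₁ : Measure ℝ) [IsProbabilityMeasure μ₀] [IsProbabilityMeasure μ₁] (ξ : ℝ) :
    FT (μ₀.conv μ₁) ξ = FT μ₀ ξ * FT μ₁ ξ := by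
  rw [FT_eq, Measure.conv,
    integral_map (by fun_prop) ((continuous_eexp ξ).aestronglyMeasurable)]
  have : ∀ p : ℝ × ℝ, eexp ξ (p.1 + p.2) = eexp ξ p.1 * eexp ξ p.2 := by
    intro p
    simp only [eexp, ← Complex.exp_add]
    congr 1
    push_cast; ring
  simp_rw [this]
  rw [integral_prod_mul (f := eexp ξ) (g := eexp ξ)]
  rfl

lemma FT_continuous (ν : Measure ℝ) [IsProbabilityMeasure ν] : Continuous (FT ν) := by
  apply continuous_of_dominated (bound := fun _ => (1:ℝ))
    (fun ξ => (continuous_eexp ξ).aestronglyMeasurable)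
    (fun ξ => Filter.Eventually.of_forall fun x => by
      simp only [show ∀ y:ℝ, ‖eexp ξ y‖ = 1 from norm_eexp ξ]; exact le_refl 1)
    (integrable_const 1)
  exact Filter.Eventually.of_forall fun x => by
    have : Continuous fun ξ : ℝ => eexp ξ x := by unfold eexp; fun_prop
    exact this

noncomputable def Efun (μ : Measure ℝ) [IsProbabilityMeasure μ] (l : ℝ) : Lp ℂ 2 μ :=
  (memL2_eexp μ l).toLp (eexp l)

lemma conj_eexp_mul (l l' x : ℝ) :
    (starRingEnd ℂ) (eexp l x) * eexp l' x = eexp (l' - l) x := by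
  rw [eexp, eexp, eexp, ← Complex.exp_conj, ← Complex.exp_add]
  congr 1
  simp only [map_mul, map_neg, map_ofNat, Complex.conj_I, Complex.conj_ofReal]
  push_cast; ring

lemma inner_E (μ : Measure ℝ) [IsProbabilityMeasure μ] (l l' : ℝ) :
    ⟪Efun μ l, Efun μ l'⟫_ℂ = FT μ (l' - l) := by
  rw [L2.inner_def, FT_eq]
  refine integral_congr_ae ?_
  filter_upwards [MemLp.coeFn_toLp (memL2_eexp μ l), MemLp.coeFn_toLp (memL2_eexp μ l')]
    with x hx hx'
  rw [show (Efun μ l : ℝ → ℂ) x = eexp l x from hx,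
    show (Efun μ l' : ℝ → ℂ) x = eexp l' x from hx',
    RCLike.inner_apply, mul_comm (eexp l' x), conj_eexp_mul]

lemma norm_sq_E (μ : Measure ℝ) [IsProbabilityMeasure μ] (l : ℝ) : ‖Efun μ l‖ ^ 2 = 1 := by
  have h := inner_self_eq_norm_sq_to_K (𝕜 := ℂ) (Efun μ l)
  rw [inner_E, sub_self, FT_zero] at h
  have h2 : ((‖Efun μ l‖ ^ 2 : ℝ) : ℂ) = ((1:ℝ):ℂ) := by push_cast; simpa using h.symm
  exact Complex.ofReal_injective h2

lemma orthonormal_E (μ : Measure ℝ) [IsProbabilityMeasure μ] (Λ : Set ℝ)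
    (h : ∀ l ∈ Λ, ∀ l' ∈ Λ, l ≠ l' → FT μ (l - l') = 0) :
    Orthonormal ℂ (fun l : Λ => Efun μ l) := by
  classical
  rw [orthonormal_iff_ite]
  intro i j
  rw [inner_E]
  by_cases hij : i = j
  · subst hij; simp [sub_self, FT_zero]
  · rw [if_neg hij]
    exact h _ j.2 _ i.2 (fun e => hij (Subtype.ext e.symm))

lemma ofReal_norm_sq (z : ℂ) : ((‖z‖ ^ 2 : ℝ) : ℂ) = (starRingEnd ℂ) z * z := by
  have h : ‖z‖ ^ 2 = Complex.normSq z := by exact (Complex.sq_norm z)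
  rw [h, Complex.normSq_eq_conj_mul_self]

lemma norm_FT_one_of_spectrum (μ₀ μ₁ : Measure ℝ)
    [IsProbabilityMeasure μ₀] [IsProbabilityMeasure μ₁] (Λ : Set ℝ)
    (hbz : IsBiZeroSet μ₀ Λ) (hsp : IsSpectrumOf (μ₀.conv μ₁) Λ)
    (ξ : ℝ) (hne : FT μ₀ ξ ≠ 0) : ‖FT μ₁ ξ‖ = 1 := by
  set μ := μ₀.conv μ₁ with hμ
  set v : Λ → Lp ℂ 2 μ := fun l => Efun μ (l : ℝ) with hv
  have hon : Orthonormal ℂ v := by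
    apply orthonormal_E
    intro l hl l' hl' hll
    rw [hsp.1 l hl l' hl', if_neg hll]
  have hbot : (Submodule.span ℂ (Set.range v))ᗮ = ⊥ := by
    rw [Submodule.eq_bot_iff]
    intro f hf
    apply hsp.2 f
    intro l hl
    have h0 : ⟪v ⟨l, hl⟩, f⟫_ℂ = 0 :=
      (Submodule.mem_orthogonal _ f).mp hf _ (Submodule.subset_span ⟨⟨l, hl⟩, rfl⟩)
    have heq : (∫ x, (f : ℝ → ℂ) x * (starRingEnd ℂ) (eexp l x) ∂μ) = ⟪v ⟨l, hl⟩, f⟫_ℂ := by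
      rw [L2.inner_def]
      refine integral_congr_ae ?_
      filter_upwards [MemLp.coeFn_toLp (memL2_eexp μ l)] with x hx
      rw [RCLike.inner_apply, show (Efun μ l : ℝ → ℂ) x = eexp l x from hx, mul_comm]
    show (∫ x, (f : ℝ → ℂ) x * (starRingEnd ℂ) (eexp l x) ∂μ) = 0
    rw [heq, h0]
  let b : HilbertBasis Λ ℂ (Lp ℂ 2 μ) := HilbertBasis.mkOfOrthogonalEqBot hon hbot
  have hb : ⇑b = v := HilbertBasis.coe_mkOfOrthogonalEqBot hon hbot
  -- Parseval at Efun μ ξ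
  have hP := b.hasSum_inner_mul_inner (Efun μ ξ) (Efun μ ξ)
  rw [hb] at hP
  have hP2 : HasSum (fun i : Λ => ((‖FT μ (ξ - (i:ℝ))‖ ^ 2 : ℝ) : ℂ)) 1 := by
    have hxx : ⟪Efun μ ξ, Efun μ ξ⟫_ℂ = 1 := by rw [inner_E, sub_self, FT_zero]
    rw [hxx] at hP
    refine (congrArg (fun f : Λ → ℂ => HasSum f 1) (?_ : (fun i : Λ => ((‖FT μ (ξ - (i:ℝ))‖ ^ 2 : ℝ) : ℂ)) = fun i => ⟪Efun μ ξ, v i⟫_ℂ * ⟪v i, Efun μ ξ⟫_ℂ)).mpr hP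
    funext i
    have e1 : ⟪v i, Efun μ ξ⟫_ℂ = FT μ (ξ - (i:ℝ)) := inner_E μ (i:ℝ) ξ
    have e2 : ⟪Efun μ ξ, v i⟫_ℂ = (starRingEnd ℂ) (FT μ (ξ - (i:ℝ))) := by
      rw [← e1, ← inner_conj_symm]
    rw [e1, e2, ofReal_norm_sq]
  have hsum : HasSum (fun i : Λ => ‖FT μ (ξ - (i:ℝ))‖ ^ 2) 1 :=
    Complex.hasSum_ofReal.mp hP2
  -- Bessel for μ₀
  have hon₀ : Orthonormal ℂ (fun l : Λ => Efun μ₀ (l : ℝ)) := orthonormal_E μ₀ Λ hbz.2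
  have hbessel : ∑' i : Λ, ‖FT μ₀ (ξ - (i:ℝ))‖ ^ 2 ≤ 1 := by
    have h := hon₀.tsum_inner_products_le (Efun μ₀ ξ)
    rw [norm_sq_E] at h
    simp only [inner_E] at h
    exact h
  have hsummable : Summable (fun i : Λ => ‖FT μ₀ (ξ - (i:ℝ))‖ ^ 2) := by
    have h := hon₀.inner_products_summable (Efun μ₀ ξ)
    simp only [inner_E] at h
    exact h
  -- comparison
  by_contra hlt1
  have hle := norm_FT_le μ₁ ξ
  have hlt : ‖FT μ₁ ξ‖ < 1 := lt_of_le_of_ne hle hlt1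
  have hfg : ∀ i : Λ, ‖FT μ (ξ - (i:ℝ))‖ ^ 2 ≤ ‖FT μ₀ (ξ - (i:ℝ))‖ ^ 2 := by
    intro i
    rw [hμ, FT_conv, norm_mul]
    have h1 := norm_FT_le μ₁ (ξ - (i:ℝ))
    have h3 : (0:ℝ) ≤ ‖FT μ₁ (ξ - (i:ℝ))‖ := norm_nonneg _
    calc (‖FT μ₀ (ξ - (i:ℝ))‖ * ‖FT μ₁ (ξ - (i:ℝ))‖) ^ 2
        = ‖FT μ₀ (ξ - (i:ℝ))‖ ^ 2 * ‖FT μ₁ (ξ - (i:ℝ))‖ ^ 2 := by ring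
      _ ≤ ‖FT μ₀ (ξ - (i:ℝ))‖ ^ 2 * 1 :=
          mul_le_mul_of_nonneg_left (pow_le_one₀ h3 h1) (sq_nonneg _)
      _ = ‖FT μ₀ (ξ - (i:ℝ))‖ ^ 2 := mul_one _
  have hi0 : (⟨0, hbz.1⟩ : Λ) ∈ Set.univ := Set.mem_univ _
  have hstrict : ‖FT μ (ξ - ((⟨0, hbz.1⟩ : Λ) : ℝ))‖ ^ 2
      < ‖FT μ₀ (ξ - ((⟨0, hbz.1⟩ : Λ) : ℝ))‖ ^ 2 := by
    simp only [sub_zero]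
    rw [hμ, FT_conv, norm_mul]
    have h2 : (0:ℝ) < ‖FT μ₀ ξ‖ := norm_pos_iff.mpr hne
    have h3 : (0:ℝ) ≤ ‖FT μ₁ ξ‖ := norm_nonneg _
    calc (‖FT μ₀ ξ‖ * ‖FT μ₁ ξ‖) ^ 2 = ‖FT μ₀ ξ‖ ^ 2 * ‖FT μ₁ ξ‖ ^ 2 := by ring
      _ < ‖FT μ₀ ξ‖ ^ 2 * 1 :=
          mul_lt_mul_of_pos_left (by nlinarith) (pow_pos h2 2)
      _ = ‖FT μ₀ ξ‖ ^ 2 := mul_one _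
  have := hasSum_lt hfg hstrict hsum hsummable.hasSum
  rw [hsummable.hasSum.tsum_eq] at this
  exact absurd (lt_of_lt_of_le this hbessel) (lt_irrefl 1)

lemma complex_eq_one (z : ℂ) (h1 : ‖z‖ = 1) (h2 : z.re = 1) : z = 1 := by
  have hsq : z.re ^ 2 + z.im ^ 2 = 1 := by
    have h3 := Complex.sq_norm z
    rw [Complex.normSq_apply] at h3
    have : ‖z‖ = 1 := h1
    nlinarith
  apply Complex.ext
  · exact h2
  · simp only [Complex.one_im]; nlinarith

lemma eexp_ae_const (ν : Measure ℝ) [IsProbabilityMeasure ν] (ξ : ℝ) (h : ‖FT ν ξ‖ = 1) :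
    ∀ᵐ x ∂ν, eexp ξ x = FT ν ξ := by
  set c := FT ν ξ with hc
  have hcne : c ≠ 0 := by intro h0; rw [h0] at h; simp at h
  have hint : Integrable (fun x => (starRingEnd ℂ) c * eexp ξ x) ν :=
    (integrable_eexp ν ξ).const_mul _
  have hrebound : ∀ x : ℝ, ((starRingEnd ℂ) c * eexp ξ x).re ≤ 1 := by
    intro x
    calc ((starRingEnd ℂ) c * eexp ξ x).re ≤ ‖(starRingEnd ℂ) c * eexp ξ x‖ :=
          Complex.re_le_norm _
      _ = 1 := by rw [norm_mul, RCLike.norm_conj, h, norm_eexp, mul_one]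
  have hint2 : Integrable (fun x => ((starRingEnd ℂ) c * eexp ξ x).re) ν := by
    have := hint.re
    simpa [RCLike.re_to_complex] using this
  have hintre : ∫ x, ((starRingEnd ℂ) c * eexp ξ x).re ∂ν
      = ((starRingEnd ℂ) c * ∫ x, eexp ξ x ∂ν).re := by
    rw [← integral_const_mul]
    have := integral_re (μ := ν) (f := fun x => (starRingEnd ℂ) c * eexp ξ x) hint
    simpa [RCLike.re_to_complex] using this
  have hre : ∫ x, (1 - ((starRingEnd ℂ) c * eexp ξ x).re) ∂ν = 0 := by
    rw [integral_sub (integrable_const 1) hint2, hintre, ← FT_eq, ← hc]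
    have h1 : ((starRingEnd ℂ) c * c).re = 1 := by
      rw [← Complex.normSq_eq_conj_mul_self]
      have : ‖c‖ = 1 := h
      simp only [Complex.ofReal_re]
      rw [← Complex.sq_norm, this]; norm_num
    rw [h1]
    simp
  have hae : ∀ᵐ x ∂ν, (1 - ((starRingEnd ℂ) c * eexp ξ x).re) = 0 := by
    have := (integral_eq_zero_iff_of_nonneg
      (f := fun x => 1 - ((starRingEnd ℂ) c * eexp ξ x).re)
      (fun x => by simp only [Pi.zero_apply]; linarith [hrebound x])
      ((integrable_const 1).sub hint2)).mp hre
    exact this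
  filter_upwards [hae] with x hx
  have hz : (starRingEnd ℂ) c * eexp ξ x = 1 := by
    apply complex_eq_one
    · rw [norm_mul, RCLike.norm_conj, h, norm_eexp, mul_one]
    · linarith [hx]
  have := congrArg (fun z => c * z) hz
  simp only [mul_one] at this
  rw [← mul_assoc, Complex.mul_conj] at this
  have hns : Complex.normSq c = 1 := by
    have : ‖c‖ = 1 := h
    rw [← Complex.sq_norm, this]; norm_num
  rw [hns] at this
  simpa using this

lemma eq_dirac_of_ae_eq (ν : Measure ℝ) [IsProbabilityMeasure ν] (a : ℝ) (h : ∀ᵐ x ∂ν, x = a) :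
    ν = Measure.dirac a := by
  have hnull : ν {a}ᶜ = 0 := by
    rw [show ({a}ᶜ : Set ℝ) = {x | ¬ x = a} by ext x; simp]
    exact MeasureTheory.ae_iff.mp h
  ext s hs
  rw [Measure.dirac_apply' _ hs]
  by_cases ha : a ∈ s
  · rw [Set.indicator_of_mem ha]
    have hsc : ν sᶜ = 0 := measure_mono_null
      (Set.compl_subset_compl.mpr (Set.singleton_subset_iff.mpr ha)) hnull
    have := prob_compl_eq_zero_iff hs |>.mp hsc
    simpa using this
  · rw [Set.indicator_of_notMem ha]
    refine measure_mono_null (fun x hx => ?_) hnull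
    simp only [Set.mem_compl_iff, Set.mem_singleton_iff]
    rintro rfl; exact ha hx

lemma exp_eq_int (ξ x x₀ : ℝ) (hx : eexp ξ x = eexp ξ x₀) : ∃ n : ℤ, ξ * (x - x₀) = n := by
  rw [eexp, eexp, Complex.exp_eq_exp_iff_exists_int] at hx
  obtain ⟨n, hn⟩ := hx
  refine ⟨-n, ?_⟩
  have h2 : (2 * (π:ℂ) * Complex.I) * (↑(ξ * (x - x₀)) : ℂ)
      = (2 * (π:ℂ) * Complex.I) * (↑((-n : ℤ)) : ℂ) := by
    push_cast
    linear_combination -hn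
  have hne : (2 * (π:ℂ) * Complex.I) ≠ 0 := by
    simp [Real.pi_ne_zero, Complex.I_ne_zero]
  have h3 := mul_left_cancel₀ hne h2
  exact_mod_cast h3

lemma dirac_of_FT_norm_one (ν : Measure ℝ) [IsProbabilityMeasure ν] (ε : ℝ) (hε : 0 < ε)
    (h : ∀ ξ : ℝ, |ξ| < ε → ‖FT ν ξ‖ = 1) : ∃ a : ℝ, ν = Measure.dirac a := by
  set ξ₁ := ε / 2 with hξ₁
  set ξ₂ := ε * Real.sqrt 2 / 4 with hξ₂
  have hs2 : Real.sqrt 2 < 2 := by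
    nlinarith [Real.sq_sqrt (by norm_num : (0:ℝ) ≤ 2), Real.sqrt_nonneg 2]
  have hs2pos : 0 < Real.sqrt 2 := Real.sqrt_pos.mpr (by norm_num)
  have h1 : |ξ₁| < ε := by rw [abs_of_pos (by positivity)]; rw [hξ₁]; linarith
  have h2 : |ξ₂| < ε := by rw [abs_of_pos (by positivity)]; rw [hξ₂]; nlinarith
  have a1 := eexp_ae_const ν ξ₁ (h _ h1)
  have a2 := eexp_ae_const ν ξ₂ (h _ h2)
  haveI : (MeasureTheory.ae ν).NeBot := ae_neBot.mpr (IsProbabilityMeasure.ne_zero ν)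
  obtain ⟨x₀, hx₀1, hx₀2⟩ := (a1.and a2).exists
  refine ⟨x₀, eq_dirac_of_ae_eq ν x₀ ?_⟩
  filter_upwards [a1, a2] with x hx1 hx2
  by_contra hxx
  obtain ⟨m, hm⟩ := exp_eq_int ξ₁ x x₀ (by rw [hx1, hx₀1])
  obtain ⟨n, hn⟩ := exp_eq_int ξ₂ x x₀ (by rw [hx2, hx₀2])
  have hd : x - x₀ ≠ 0 := sub_ne_zero.mpr hxx
  have hm0 : (m:ℝ) ≠ 0 := by
    rw [← hm, hξ₁]; exact mul_ne_zero (by positivity) hd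
  have hmn : (m:ℝ) * ξ₂ = (n:ℝ) * ξ₁ := by rw [← hm, ← hn]; ring
  have h4 : ε * ((m:ℝ) * Real.sqrt 2) = ε * (2 * n) := by
    rw [hξ₁, hξ₂] at hmn; linear_combination 4 * hmn
  have h5 : (m:ℝ) * Real.sqrt 2 = 2 * n := mul_left_cancel₀ (ne_of_gt hε) h4
  have key : Real.sqrt 2 = (2 * n) / m := by
    rw [eq_div_iff hm0]; linarith
  exact irrational_sqrt_two ⟨(2 * n) / m, by push_cast; exact key.symm⟩

theorem stmt_5 (μ₀ μ₁ : Measure ℝ) [IsProbabilityMeasure μ₀] [IsProbabilityMeasure μ₁]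
    (hcpt₀ : ∃ K : Set ℝ, IsCompact K ∧ μ₀ Kᶜ = 0)
    (hcpt₁ : ∃ K : Set ℝ, IsCompact K ∧ μ₁ Kᶜ = 0)
    (hd₀ : ¬ ∃ a : ℝ, μ₀ = Measure.dirac a)
    (hd₁ : ¬ ∃ a : ℝ, μ₁ = Measure.dirac a)
    (Λ : Set ℝ) (hΛ : Λ.Countable) (hbz : IsBiZeroSet μ₀ Λ) :
    IsBiZeroSet (μ₀.conv μ₁) Λ ∧ ¬ IsSpectrumOf (μ₀.conv μ₁) Λ := by
  have hbzc : IsBiZeroSet (μ₀.conv μ₁) Λ :=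
    ⟨hbz.1, fun l hl l' hl' hne => by rw [FT_conv, hbz.2 l hl l' hl' hne, zero_mul]⟩
  refine ⟨hbzc, ?_⟩
  intro hsp
  have key : ∀ ξ : ℝ, FT μ₀ ξ ≠ 0 → ‖FT μ₁ ξ‖ = 1 :=
    fun ξ h => norm_FT_one_of_spectrum μ₀ μ₁ Λ hbz hsp ξ h
  have hev : ∀ᶠ ξ in nhds (0:ℝ), FT μ₀ ξ ≠ 0 :=
    (FT_continuous μ₀).continuousAt.eventually_ne (by rw [FT_zero]; exact one_ne_zero)
  rw [Metric.eventually_nhds_iff] at hev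
  obtain ⟨ε, hε, hball⟩ := hev
  refine hd₁ (dirac_of_FT_norm_one μ₁ ε hε fun ξ hξ => key ξ (hball ?_))
  simpa [Real.dist_eq] using hξ
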